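/- Let l be a nonnegative integer and m ∈ ℤ. Define ₁F₁(a; b; z) = Σ_{n=0}^∞ ((a)_n / (b)_n) zⁿ/n!, Ψ_{m,l}(θ,y) = e^{−i m θ/2} e^{−y²/2} y^l · ₁F₁( (1 + 2l − m)/4 ; l + 1/2 ; y² ), and for smooth F : ℝ² → ℂ define the lowering operator (η⁻ F)(θ,y) = (1/2) e^{2iθ} ( −y ∂_y F(θ,y) + i ∂_θ F(θ,y) − (y² + 1/2) F(θ,y) ). Then for all (θ,y) ∈ ℝ²: (η⁻ Ψ_{m,l})(θ,y) = −((2l + 1 − m)/4) · Ψ_{m−4,l}(θ,y). In particular η⁻ annihilates Ψ_{2l+1,l}(θ,y) = e^{−i(2l+1)θ/2} e^{−y²/2} y^l, the lowest weight vector. -/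

import Mathlib

open Complex

/-- The confluent hypergeometric function
`₁F₁(a;b;z) = Σ_{n≥0} ((a)_n/(b)_n) zⁿ/n!` (Pochhammer rising factorials). -/
noncomputable def oneFone (a b z : ℂ) : ℂ :=
  ∑' n : ℕ, ((ascPochhammer ℂ n).eval a / (ascPochhammer ℂ n).eval b) * z ^ n
    / (n.factorial : ℂ)

/-- The weight-`m` `K`-finite vector
`Ψ_{m,l}(θ,y) = e^{-imθ/2} e^{-y²/2} y^l ₁F₁((1+2l-m)/4; l+1/2; y²)`. -/
noncomputable def Psi (m : ℤ) (l : ℕ) (θ y : ℝ) : ℂ :=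
  Complex.exp (-I * (m : ℂ) * (θ : ℂ) / 2) * Complex.exp (-(y : ℂ) ^ 2 / 2)
    * (y : ℂ) ^ l
    * oneFone ((1 + 2 * (l : ℂ) - (m : ℂ)) / 4) ((l : ℂ) + 1/2) ((y : ℂ) ^ 2)

/-- Partial derivative in the first variable `θ`. -/
noncomputable def pderivT (F : ℝ → ℝ → ℂ) (θ y : ℝ) : ℂ := deriv (fun θ' => F θ' y) θ

/-- Partial derivative in the second variable `y`. -/
noncomputable def pderivY (F : ℝ → ℝ → ℂ) (θ y : ℝ) : ℂ := deriv (fun y' => F θ y') y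

/-- The lowering operator
`(η⁻F)(θ,y) = (1/2) e^{2iθ} (-y ∂_yF + i ∂_θF - (y² + 1/2) F)`. -/
noncomputable def etaMinus (F : ℝ → ℝ → ℂ) (θ y : ℝ) : ℂ :=
  (1/2 : ℂ) * Complex.exp (2 * I * (θ : ℂ))
    * (-(y : ℂ) * pderivY F θ y + I * pderivT F θ y
        - ((y : ℂ) ^ 2 + 1/2) * F θ y)

noncomputable def cf (a : ℂ) (l : ℕ) (n : ℕ) : ℂ :=
  (ascPochhammer ℂ n).eval a / (ascPochhammer ℂ n).eval ((l : ℂ) + 1/2) / (n.factorial : ℂ)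

lemma bplus_ne (l n : ℕ) : ((l : ℂ) + 1/2 + (n : ℂ)) ≠ 0 := by
  have h : ((l : ℝ) + 1/2 + (n : ℝ)) ≠ 0 := by positivity
  have : ((l : ℂ) + 1/2 + (n : ℂ)) = (((l : ℝ) + 1/2 + (n : ℝ) : ℝ) : ℂ) := by push_cast; ring
  rw [this]
  exact_mod_cast Complex.ofReal_ne_zero.2 h

lemma pb_ne (l : ℕ) : ∀ n : ℕ, (ascPochhammer ℂ n).eval ((l : ℂ) + 1/2) ≠ 0 := by
  intro n
  induction n with
  | zero => simp
  | succ n ih =>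
    rw [ascPochhammer_succ_eval]
    exact mul_ne_zero ih (bplus_ne l n)

lemma pb_norm (l : ℕ) : ∀ n : ℕ, ‖((l : ℂ) + 1/2 + (n : ℂ))‖ = (l : ℝ) + 1/2 + n := by
  intro n
  have : ((l : ℂ) + 1/2 + (n : ℂ)) = (((l : ℝ) + 1/2 + (n : ℝ) : ℝ) : ℂ) := by push_cast; ring
  rw [this, Complex.norm_real, Real.norm_of_nonneg (by positivity)]

lemma cf_succ (a : ℂ) (l n : ℕ) :
    cf a l (n + 1) = cf a l n * (a + n) / (((l : ℂ) + 1/2 + n) * (n + 1)) := by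
  unfold cf
  rw [ascPochhammer_succ_eval, ascPochhammer_succ_eval, Nat.factorial_succ]
  have h1 := pb_ne l n
  have h2 := bplus_ne l n
  have h3 : ((n.factorial : ℂ)) ≠ 0 := Nat.cast_ne_zero.2 n.factorial_ne_zero
  have h4 : ((n : ℂ) + 1) ≠ 0 := by
    have : ((n : ℝ) + 1) ≠ 0 := by positivity
    have e : ((n : ℂ) + 1) = (((n : ℝ) + 1 : ℝ) : ℂ) := by push_cast; ring
    rw [e]; exact_mod_cast Complex.ofReal_ne_zero.2 this
  push_cast
  field_simp

lemma cf_norm_succ (a : ℂ) (l n : ℕ) :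
    ‖cf a l (n + 1)‖ = ‖cf a l n‖ * ‖a + n‖ / (((l : ℝ) + 1/2 + n) * (n + 1)) := by
  rw [cf_succ, norm_div, norm_mul, norm_mul, pb_norm]
  congr 1
  have : ((n : ℂ) + 1) = (((n : ℝ) + 1 : ℝ) : ℂ) := by push_cast; ring
  rw [this, Complex.norm_real, Real.norm_of_nonneg (by positivity)]

lemma summable_cf (a : ℂ) (l : ℕ) (r : ℝ) (hr : 0 ≤ r) :
    Summable (fun n : ℕ => ((n : ℝ) + 1) * ‖cf a l n‖ * r ^ n) := by
  apply summable_of_ratio_norm_eventually_le (r := 1/2) (by norm_num)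
  rw [Filter.eventually_atTop]
  refine ⟨⌈‖a‖⌉₊ + ⌈8 * r⌉₊, fun n hn => ?_⟩
  have hna : ‖a‖ ≤ (n : ℝ) := le_trans (Nat.le_ceil _) (by exact_mod_cast le_trans (Nat.le_add_right _ _) hn)
  have hnr : 8 * r ≤ (n : ℝ) := le_trans (Nat.le_ceil _) (by exact_mod_cast le_trans (Nat.le_add_left _ _) hn)
  have hden : (0:ℝ) < ((l : ℝ) + 1/2 + n) * (n + 1) := by positivity
  have hc : (0:ℝ) ≤ ‖cf a l n‖ := norm_nonneg _
  have hrn : (0:ℝ) ≤ r ^ n := by positivity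
  have hl : (0:ℝ) ≤ (l:ℝ) := Nat.cast_nonneg l
  have hn0 : (0:ℝ) ≤ (n:ℝ) := Nat.cast_nonneg n
  have han : ‖a + (n:ℂ)‖ ≤ ‖a‖ + n := by
    calc ‖a + (n:ℂ)‖ ≤ ‖a‖ + ‖(n:ℂ)‖ := norm_add_le _ _
    _ = ‖a‖ + n := by rw [Complex.norm_natCast]
  rw [Real.norm_of_nonneg (by positivity), Real.norm_of_nonneg (by positivity)]
  rw [cf_norm_succ]
  have key : ((n:ℝ) + 1 + 1) * ‖a + (n:ℂ)‖ * r ≤ (1/2) * (((n:ℝ)+1) * (((l : ℝ) + 1/2 + n) * (n + 1))) := by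
    have han2 : ‖a + (n:ℂ)‖ ≤ 2*(n:ℝ) := le_trans han (by linarith)
    have s1 : ((n:ℝ) + 1 + 1) * ‖a + (n:ℂ)‖ * r ≤ ((n:ℝ)+1+1) * (2*(n:ℝ)) * r := by
      nlinarith [mul_nonneg (mul_nonneg (by positivity : (0:ℝ) ≤ (n:ℝ)+1+1) hr) (sub_nonneg.2 han2)]
    have s2 : ((n:ℝ)+1+1) * (2*(n:ℝ)) * r ≤ ((n:ℝ)+1+1) * (2*(n:ℝ)) * ((n:ℝ)/8) := by
      have : r ≤ (n:ℝ)/8 := by linarith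
      nlinarith [mul_nonneg (by positivity : (0:ℝ) ≤ ((n:ℝ)+1+1) * (2*(n:ℝ))) (sub_nonneg.2 this)]
    have s3 : ((n:ℝ)+1+1) * (2*(n:ℝ)) * ((n:ℝ)/8) ≤ (1/2) * (((n:ℝ)+1) * (((l : ℝ) + 1/2 + n) * (n + 1))) := by
      nlinarith [mul_nonneg hl (sq_nonneg ((n:ℝ)+1)), sq_nonneg (n:ℝ), mul_nonneg (mul_nonneg hn0 hn0) hn0]
    linarith
  push_cast
  calc ((n:ℝ) + 1 + 1) * (‖cf a l n‖ * ‖a + (n:ℂ)‖ / (((l : ℝ) + 1/2 + n) * (n + 1))) * r ^ (n+1)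
      = (((n:ℝ) + 1 + 1) * ‖a + (n:ℂ)‖ * r / (((l : ℝ) + 1/2 + n) * (n + 1))) * (‖cf a l n‖ * r ^ n) := by
        rw [pow_succ]; ring
    _ ≤ ((1/2) * ((n:ℝ)+1)) * (‖cf a l n‖ * r ^ n) := by
        apply mul_le_mul_of_nonneg_right _ (by positivity)
        rw [div_le_iff₀ hden]
        linarith [key]
    _ = 1/2 * (((n:ℝ) + 1) * ‖cf a l n‖ * r ^ n) := by ring

lemma summable_cf_pow (a : ℂ) (l : ℕ) (z : ℂ) :
    Summable (fun n : ℕ => cf a l n * z ^ n) := by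
  apply Summable.of_norm_bounded (summable_cf a l ‖z‖ (norm_nonneg z))
  intro n
  rw [norm_mul, norm_pow]
  have : (1:ℝ) ≤ (n:ℝ) + 1 := by linarith [Nat.cast_nonneg (α := ℝ) n]
  nlinarith [norm_nonneg (cf a l n), pow_nonneg (norm_nonneg z) n, mul_nonneg (norm_nonneg (cf a l n)) (pow_nonneg (norm_nonneg z) n)]

lemma summable_cf_two (a : ℂ) (l : ℕ) (y : ℝ) :
    Summable (fun n : ℕ => (2*(n:ℂ)) * cf a l n * (y:ℂ) ^ (2*n)) := by
  apply Summable.of_norm_bounded ((summable_cf a l (y^2) (sq_nonneg y)).mul_left 2)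
  intro n
  rw [norm_mul, norm_mul, norm_pow]
  have h1 : ‖(2*(n:ℂ))‖ = 2*(n:ℝ) := by
    rw [norm_mul, Complex.norm_natCast]; simp
  have h2 : ‖(y:ℂ)‖ ^ (2*n) = (y^2)^n := by
    rw [Complex.norm_real, Real.norm_eq_abs, pow_mul]
    congr 1
    exact sq_abs y
  rw [h1, h2]
  have := norm_nonneg (cf a l n)
  have := pow_nonneg (sq_nonneg y) n
  nlinarith [mul_nonneg (norm_nonneg (cf a l n)) (pow_nonneg (sq_nonneg y) n)]

lemma oneFone_eq (a : ℂ) (l : ℕ) (z : ℂ) :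
    oneFone a ((l:ℂ) + 1/2) z = ∑' n : ℕ, cf a l n * z ^ n := by
  exact tsum_congr fun n => by unfold cf; ring

lemma hasDerivAt_H (a : ℂ) (l : ℕ) (y : ℝ) :
    HasDerivAt (fun y' : ℝ => ∑' n : ℕ, cf a l n * ((y':ℂ)) ^ (2*n))
      (∑' n : ℕ, (2*(n:ℂ)) * cf a l n * (y:ℂ) ^ (2*n-1)) y := by
  set R : ℝ := |y| + 1 with hR
  set M : ℝ := max 1 R with hM
  have hM1 : (1:ℝ) ≤ M := le_max_left _ _
  have hRM : R ≤ M := le_max_right _ _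
  have hu : Summable (fun n : ℕ => 2*M*(((n:ℝ)+1) * ‖cf a l n‖ * (M^2)^n)) :=
    (summable_cf a l (M^2) (sq_nonneg M)).mul_left _
  refine hasDerivAt_tsum_of_isPreconnected (g := fun n y' => cf a l n * ((y':ℝ):ℂ)^(2*n))
    (g' := fun n y' => (2*(n:ℂ)) * cf a l n * ((y':ℝ):ℂ)^(2*n-1)) (t := Set.Ioo (-R) R) (y₀ := y)
    hu isOpen_Ioo (isPreconnected_Ioo)
    (fun n y' _ => ?_) (fun n y' hy' => ?_) ?_ ?_ ?_
  · -- HasDerivAt term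
    have h := ((hasDerivAt_pow (2*n) ((y':ℝ):ℂ)).const_mul (cf a l n)).comp_ofReal
    refine h.congr_deriv ?_
    push_cast
    ring
  · -- bound
    have hy'M : |y'| ≤ M := by
      rw [Set.mem_Ioo] at hy'
      rw [abs_le]
      constructor <;> [linarith [hy'.1]; linarith [hy'.2]]
    have : ‖(2*(n:ℂ)) * cf a l n * ((y':ℝ):ℂ) ^ (2*n-1)‖
        = 2*(n:ℝ) * ‖cf a l n‖ * |y'| ^ (2*n-1) := by
      rw [norm_mul, norm_mul, norm_pow, Complex.norm_real, Real.norm_eq_abs, norm_mul,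
        Complex.norm_natCast]
      simp
    rw [this]
    have hb1 : |y'| ^ (2*n-1) ≤ M ^ (2*n-1) := pow_le_pow_left₀ (abs_nonneg _) hy'M _
    have hb2 : M ^ (2*n-1) ≤ M ^ (2*n) := pow_le_pow_right₀ hM1 (Nat.sub_le _ _)
    have hb3 : (M:ℝ) ^ (2*n) = (M^2)^n := by rw [← pow_mul]
    calc 2*(n:ℝ) * ‖cf a l n‖ * |y'| ^ (2*n-1)
        ≤ 2*((n:ℝ)+1) * ‖cf a l n‖ * M ^ (2*n) := by
          have hc0 := norm_nonneg (cf a l n)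
          have h0 : (0:ℝ) ≤ |y'| ^ (2*n-1) := by positivity
          have hXY : |y'| ^ (2*n-1) ≤ M ^ (2*n) := le_trans hb1 hb2
          have hY : (0:ℝ) ≤ M ^ (2*n) := pow_nonneg (le_trans zero_le_one hM1) _
          have hn0 : (0:ℝ) ≤ (n:ℝ) := Nat.cast_nonneg n
          nlinarith [mul_nonneg hc0 (mul_nonneg hn0 (sub_nonneg.2 hXY)), mul_nonneg hc0 hY]
      _ ≤ 2*M*(((n:ℝ)+1) * ‖cf a l n‖ * (M^2)^n) := by
          rw [hb3]
          nlinarith [mul_nonneg (mul_nonneg (by positivity : (0:ℝ) ≤ (n:ℝ)+1) (norm_nonneg (cf a l n))) (pow_nonneg (sq_nonneg M) n)]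
  · -- y ∈ Ioo
    rw [Set.mem_Ioo]
    constructor <;> [linarith [neg_abs_le y]; linarith [le_abs_self y]]
  · -- summable at point
    apply (summable_cf_pow a l ((y:ℂ)^2)).congr
    intro n; rw [← pow_mul]
  · rw [Set.mem_Ioo]
    constructor <;> [linarith [neg_abs_le y]; linarith [le_abs_self y]]

lemma poch_shift (n : ℕ) (a : ℂ) :
    (ascPochhammer ℂ n).eval a * (a + n) = a * (ascPochhammer ℂ n).eval (a + 1) := by
  have h1 := ascPochhammer_succ_eval n a
  have h2 : (ascPochhammer ℂ (n+1)).eval a = a * (ascPochhammer ℂ n).eval (a+1) := by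
    rw [ascPochhammer_succ_left]
    simp [Polynomial.eval_comp]
  rw [← h1, h2]

lemma cf_shift (a : ℂ) (l : ℕ) (n : ℕ) :
    (a + n) * cf a l n = a * cf (a+1) l n := by
  have e1 : (a+n) * cf a l n
      = ((ascPochhammer ℂ n).eval a * (a + n)) / (ascPochhammer ℂ n).eval ((l:ℂ)+1/2)
        / (n.factorial : ℂ) := by
    unfold cf; ring
  rw [e1, poch_shift]
  unfold cf; ring

lemma summable_H (a : ℂ) (l : ℕ) (y : ℝ) :
    Summable (fun n : ℕ => cf a l n * (y:ℂ) ^ (2*n)) := by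
  apply (summable_cf_pow a l ((y:ℂ)^2)).congr
  intro n; rw [← pow_mul]

lemma key_sum (a : ℂ) (l : ℕ) (y : ℝ) :
    -a * (∑' n : ℕ, cf a l n * (y:ℂ) ^ (2*n))
      - (1/2) * (∑' n : ℕ, (2*(n:ℂ)) * cf a l n * (y:ℂ) ^ (2*n))
      = -a * ∑' n : ℕ, cf (a+1) l n * (y:ℂ) ^ (2*n) := by
  rw [← tsum_mul_left (a := -a), ← tsum_mul_left (a := (1/2 : ℂ)), ← tsum_mul_left (a := -a),
    ← Summable.tsum_sub ((summable_H a l y).mul_left _) ((summable_cf_two a l y).mul_left _)]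
  refine tsum_congr fun n => ?_
  have h := cf_shift a l n
  have : -a * (cf a l n * (y:ℂ)^(2*n)) - (1/2) * ((2*(n:ℂ)) * cf a l n * (y:ℂ)^(2*n))
      = (-((a + n) * cf a l n)) * (y:ℂ)^(2*n) := by ring
  rw [this, h]
  ring

lemma yHD (a : ℂ) (l : ℕ) (y : ℝ) :
    (y:ℂ) * ∑' n : ℕ, (2*(n:ℂ)) * cf a l n * (y:ℂ) ^ (2*n-1)
      = ∑' n : ℕ, (2*(n:ℂ)) * cf a l n * (y:ℂ) ^ (2*n) := by
  rw [← tsum_mul_left]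
  refine tsum_congr fun n => ?_
  cases n with
  | zero => simp
  | succ k =>
    have h : 2*(k+1) - 1 = 2*k + 1 := by omega
    have h2 : 2*(k+1) = 2*k + 2 := by omega
    rw [h, h2]
    push_cast
    ring

lemma Psi_eq (m : ℤ) (l : ℕ) (θ y : ℝ) :
    Psi m l θ y = Complex.exp (-I * (m : ℂ) * (θ : ℂ) / 2)
      * (Complex.exp (-(y:ℂ)^2/2) * (y:ℂ)^l
        * ∑' n : ℕ, cf ((1 + 2*(l:ℂ) - (m:ℂ))/4) l n * (y:ℂ) ^ (2*n)) := by
  unfold Psi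
  rw [oneFone_eq]
  rw [show (∑' n : ℕ, cf ((1 + 2*(l:ℂ) - (m:ℂ))/4) l n * ((y:ℂ)^2) ^ n)
      = ∑' n : ℕ, cf ((1 + 2*(l:ℂ) - (m:ℂ))/4) l n * (y:ℂ) ^ (2*n) from
    tsum_congr fun n => by rw [← pow_mul]]
  ring

lemma hasDerivAt_PsiT (m : ℤ) (l : ℕ) (θ y : ℝ) :
    HasDerivAt (fun θ' : ℝ => Psi m l θ' y)
      (-I * (m:ℂ)/2 * Psi m l θ y) θ := by
  have hz : HasDerivAt (fun z : ℂ => -I * (m:ℂ) * z / 2) (-I * (m:ℂ) / 2) (θ:ℂ) := by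
    simpa using ((hasDerivAt_id (θ:ℂ)).const_mul (-I * (m:ℂ))).div_const 2
  have h1 : HasDerivAt (fun θ' : ℝ => Complex.exp (-I * (m:ℂ) * (θ':ℂ) / 2))
      (Complex.exp (-I * (m:ℂ) * (θ:ℂ) / 2) * (-I * (m:ℂ)/2)) θ :=
    (hz.cexp).comp_ofReal
  have h2 := ((h1.mul_const (Complex.exp (-(y:ℂ)^2/2))).mul_const ((y:ℂ)^l)).mul_const
      (oneFone ((1 + 2*(l:ℂ) - (m:ℂ))/4) ((l:ℂ) + 1/2) ((y:ℂ)^2))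
  refine h2.congr_deriv ?_
  unfold Psi
  ring

lemma hasDerivAt_PsiY (m : ℤ) (l : ℕ) (θ y : ℝ) :
    HasDerivAt (fun y' : ℝ => Psi m l θ y')
      (Complex.exp (-I * (m:ℂ) * (θ:ℂ) / 2) *
        ((Complex.exp (-(y:ℂ)^2/2) * (-(y:ℂ)) * (y:ℂ)^l
            + Complex.exp (-(y:ℂ)^2/2) * ((l:ℂ) * (y:ℂ)^(l-1)))
          * (∑' n : ℕ, cf ((1 + 2*(l:ℂ) - (m:ℂ))/4) l n * (y:ℂ) ^ (2*n))
        + Complex.exp (-(y:ℂ)^2/2) * (y:ℂ)^l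
          * (∑' n : ℕ, (2*(n:ℂ)) * cf ((1 + 2*(l:ℂ) - (m:ℂ))/4) l n * (y:ℂ) ^ (2*n-1)))) y := by
  have hE : HasDerivAt (fun y' : ℝ => Complex.exp (-(y':ℂ)^2/2))
      (Complex.exp (-(y:ℂ)^2/2) * (-(y:ℂ))) y := by
    have hz : HasDerivAt (fun z : ℂ => -z^2/2) (-(y:ℂ)) ((y:ℝ):ℂ) := by
      have := ((hasDerivAt_pow 2 ((y:ℝ):ℂ)).neg).div_const 2
      refine this.congr_deriv ?_
      simp
      ring
    exact (hz.cexp).comp_ofReal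
  have hP : HasDerivAt (fun y' : ℝ => ((y':ℝ):ℂ)^l) ((l:ℂ) * (y:ℂ)^(l-1)) y := by
    have := (hasDerivAt_pow l ((y:ℝ):ℂ)).comp_ofReal
    simpa using this
  have hH := hasDerivAt_H ((1 + 2*(l:ℂ) - (m:ℂ))/4) l y
  have h2 := ((hE.mul hP).mul hH).const_mul (Complex.exp (-I * (m:ℂ) * (θ:ℂ) / 2))
  have hfun : (fun y' : ℝ => Psi m l θ y')
      = fun y' : ℝ => Complex.exp (-I * (m:ℂ) * (θ:ℂ) / 2)
        * (Complex.exp (-(y':ℂ)^2/2) * (y':ℂ)^l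
          * ∑' n : ℕ, cf ((1 + 2*(l:ℂ) - (m:ℂ))/4) l n * (y':ℂ) ^ (2*n)) :=
    funext fun y' => Psi_eq m l θ y'
  rw [hfun]
  exact h2

lemma oneFone_zero_fst (b z : ℂ) : oneFone 0 b z = 1 := by
  unfold oneFone
  rw [tsum_eq_single 0]
  · simp
  · intro n hn
    rw [ascPochhammer_ne_zero_eval_zero (S := ℂ) hn]
    simp

lemma main_part1 (l : ℕ) (m : ℤ) (θ y : ℝ) :
    etaMinus (Psi m l) θ y
      = -((2 * (l : ℂ) + 1 - (m : ℂ)) / 4) * Psi (m - 4) l θ y := by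
  have hT := (hasDerivAt_PsiT m l θ y).deriv
  have hY := (hasDerivAt_PsiY m l θ y).deriv
  unfold etaMinus pderivT pderivY
  rw [hT, hY, Psi_eq m l θ y, Psi_eq (m-4) l θ y]
  have hcast : ((1:ℂ) + 2*(l:ℂ) - (((m - 4 : ℤ)):ℂ))/4 = (1 + 2*(l:ℂ) - (m:ℂ))/4 + 1 := by
    push_cast; ring
  rw [hcast]
  have hexp : Complex.exp (-I * (((m - 4 : ℤ)):ℂ) * (θ:ℂ) / 2)
      = Complex.exp (2 * I * (θ:ℂ)) * Complex.exp (-I * (m:ℂ) * (θ:ℂ) / 2) := by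
    rw [← Complex.exp_add]; congr 1; push_cast; ring
  rw [hexp]
  set A : ℂ := (1 + 2*(l:ℂ) - (m:ℂ))/4 with hA
  set H : ℂ := ∑' n : ℕ, cf A l n * (y:ℂ) ^ (2*n) with hH
  set HD : ℂ := ∑' n : ℕ, (2*(n:ℂ)) * cf A l n * (y:ℂ) ^ (2*n-1) with hHD
  set K : ℂ := ∑' n : ℕ, cf (A+1) l n * (y:ℂ) ^ (2*n) with hK
  have key2 : -A * H - (1/2) * ((y:ℂ) * HD) = -A * K := by
    rw [hH, hK, hHD, yHD]
    exact key_sum A l y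
  have hyl : (l:ℂ) * (y:ℂ)^(l-1) * (y:ℂ) = (l:ℂ) * (y:ℂ)^l := by
    cases l with
    | zero => simp
    | succ k => rw [Nat.add_sub_cancel, pow_succ]; push_cast; ring
  have hcoef : -((2 * (l:ℂ) + 1 - (m:ℂ)) / 4) = -A := by rw [hA]; ring
  rw [hcoef]
  linear_combination (Complex.exp (2*I*(θ:ℂ)) * Complex.exp (-I*(m:ℂ)*(θ:ℂ)/2)
      * Complex.exp (-(y:ℂ)^2/2) * (y:ℂ)^l) * key2
    + (-(1/2) * Complex.exp (2*I*(θ:ℂ)) * Complex.exp (-I*(m:ℂ)*(θ:ℂ)/2)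
      * Complex.exp (-(y:ℂ)^2/2) * H) * hyl
    + (-(m:ℂ)/4 * Complex.exp (2*I*(θ:ℂ)) * Complex.exp (-I*(m:ℂ)*(θ:ℂ)/2)
      * Complex.exp (-(y:ℂ)^2/2) * (y:ℂ)^l * H) * Complex.I_sq

/-- `η⁻ Ψ_{m,l} = -((2l+1-m)/4) Ψ_{m-4,l}`; in particular `η⁻` annihilates the
lowest weight vector `Ψ_{2l+1,l}(θ,y) = e^{-i(2l+1)θ/2} e^{-y²/2} y^l`. -/
theorem etaMinus_action (l : ℕ) (m : ℤ) :
    (∀ θ y : ℝ,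
      etaMinus (Psi m l) θ y
        = -((2 * (l : ℂ) + 1 - (m : ℂ)) / 4) * Psi (m - 4) l θ y) ∧
    (∀ θ y : ℝ, etaMinus (Psi (2 * (l : ℤ) + 1) l) θ y = 0) ∧
    (∀ θ y : ℝ,
      Psi (2 * (l : ℤ) + 1) l θ y
        = Complex.exp (-I * (2 * (l : ℂ) + 1) * (θ : ℂ) / 2)
            * Complex.exp (-(y : ℂ) ^ 2 / 2) * (y : ℂ) ^ l) := by
  refine ⟨fun θ y => main_part1 l m θ y, fun θ y => ?_, fun θ y => ?_⟩
  · rw [main_part1 l (2 * (l:ℤ) + 1) θ y,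
      show -((2 * (l : ℂ) + 1 - (((2 * (l:ℤ) + 1 : ℤ)) : ℂ)) / 4) = 0 by push_cast; ring,
      zero_mul]
  · unfold Psi
    rw [show (((2 * (l:ℤ) + 1 : ℤ)) : ℂ) = 2 * (l:ℂ) + 1 by push_cast; ring,
      show ((1:ℂ) + 2 * (l:ℂ) - (2 * (l:ℂ) + 1)) / 4 = 0 by ring,
      oneFone_zero_fst, mul_one]
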